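/- Let f̂ be an integer and set f = 5·f̂ + 2. For all integers m₀, m₁, m₅, setting m₄ = m₀ − 5·m₁ − 3·m₅, the difference of sign-exponents [⌊(−2·m₄ − m₅)/5⌋ + m₀·(1 − (f+1)/5)] − [2·m₁ + m₅ + (f̂ + 2/5)·m₀ + ⌊−2·m₀/5⌋], computed in ℚ, equals the even integer −2·f̂·m₀; consequently exp(iπ·x) takes the same value on the two exponents x. -/
import Mathlib


open Real Complex

/-- Let `f = 5·f̂ + 2` and `m₄ = m₀ − 5·m₁ − 3·m₅`.  Then the difference of the two
sign-exponents `⌊(−2m₄ − m₅)/5⌋ + m₀·(1 − (f+1)/5)` and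
`2m₁ + m₅ + (f̂ + 2/5)·m₀ + ⌊−2m₀/5⌋`, computed in `ℚ`, equals the even integer
`−2·f̂·m₀`; consequently `exp(iπ·x)` takes the same value on the two exponents. -/
theorem sign_exponents_difference (fh f : ℤ) (hf : f = 5 * fh + 2)
    (m0 m1 m5 m4 : ℤ) (hm4 : m4 = m0 - 5 * m1 - 3 * m5) :
    ((⌊((-2 * m4 - m5 : ℤ) : ℚ) / 5⌋ : ℚ) + (m0 : ℚ) * (1 - ((f : ℚ) + 1) / 5)) -
        ((2 * m1 + m5 : ℤ) + ((fh : ℚ) + 2 / 5) * (m0 : ℚ) + (⌊((-2 * m0 : ℤ) : ℚ) / 5⌋ : ℚ)) =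
      ((-2 * fh * m0 : ℤ) : ℚ) ∧
    Complex.exp ((Real.pi : ℂ) * Complex.I *
        (((⌊((-2 * m4 - m5 : ℤ) : ℚ) / 5⌋ : ℚ) + (m0 : ℚ) * (1 - ((f : ℚ) + 1) / 5) : ℚ) : ℂ)) =
      Complex.exp ((Real.pi : ℂ) * Complex.I *
        ((((2 * m1 + m5 : ℤ) : ℚ) + ((fh : ℚ) + 2 / 5) * (m0 : ℚ) +
          (⌊((-2 * m0 : ℤ) : ℚ) / 5⌋ : ℚ) : ℚ) : ℂ)) := by
  have hnum : (-2 * m4 - m5 : ℤ) = -2 * m0 + 5 * (2 * m1 + m5) := by omega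
  have hfl : ⌊((-2 * m4 - m5 : ℤ) : ℚ) / 5⌋ = ⌊((-2 * m0 : ℤ) : ℚ) / 5⌋ + (2 * m1 + m5) := by
    rw [hnum]
    push_cast
    rw [show ((-2 * (m0:ℚ) + 5 * (2 * m1 + m5)) / 5) =
        (-2 * (m0:ℚ)) / 5 + ((2 * m1 + m5 : ℤ) : ℚ) by push_cast; ring]
    rw [Int.floor_add_intCast]
  have hdiff : ((⌊((-2 * m4 - m5 : ℤ) : ℚ) / 5⌋ : ℚ) + (m0 : ℚ) * (1 - ((f : ℚ) + 1) / 5)) -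
        ((2 * m1 + m5 : ℤ) + ((fh : ℚ) + 2 / 5) * (m0 : ℚ) + (⌊((-2 * m0 : ℤ) : ℚ) / 5⌋ : ℚ)) =
      ((-2 * fh * m0 : ℤ) : ℚ) := by
    rw [hfl, hf]
    push_cast
    ring
  refine ⟨hdiff, ?_⟩
  set a : ℚ := (⌊((-2 * m4 - m5 : ℤ) : ℚ) / 5⌋ : ℚ) + (m0 : ℚ) * (1 - ((f : ℚ) + 1) / 5)
  set b : ℚ := ((2 * m1 + m5 : ℤ) : ℚ) + ((fh : ℚ) + 2 / 5) * (m0 : ℚ) +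
      (⌊((-2 * m0 : ℤ) : ℚ) / 5⌋ : ℚ)
  have ha : a = b + ((-2 * fh * m0 : ℤ) : ℚ) := by linarith [hdiff]
  rw [ha]
  push_cast
  rw [show (Real.pi : ℂ) * Complex.I * ((b : ℂ) + (-2 * fh * m0 : ℂ)) =
      (Real.pi : ℂ) * Complex.I * (b : ℂ) + ((-fh * m0 : ℤ) : ℂ) * (2 * Real.pi * Complex.I) by
        push_cast; ring]
  rw [Complex.exp_add, Complex.exp_int_mul_two_pi_mul_I, mul_one]
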